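/- (Optimistic second-order general formula.) For any general source X, any R ≥ 0, and any ε, δ ∈ [0,1) satisfying ε + δ < 1, it holds that L*(ε,δ,R|X) = G*_{ε,δ}(R|X). -/

import Mathlib

open Filter MeasureTheory

namespace NY

/-- A probability distribution on a set, given by its point mass function. -/
structure Dist (α : Type*) where
  p : α → ℝ
  nonneg : ∀ x, 0 ≤ p x
  hasSum : HasSum p 1

/-- The probability of a set under a distribution. -/
noncomputable def Dist.pr {α : Type*} (P : Dist α) (A : Set α) : ℝ := ∑' x : A, P.p x.1

/-- 𝒰* : nonempty finite strings over the code alphabet 𝒰 = {1,…,K}. -/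
abbrev Word (K : ℕ) := {u : List (Fin K) // u ≠ []}

/-- Length of a string, as a real number. -/
noncomputable def wlen {K : ℕ} (u : Word K) : ℝ := u.1.length

/-- Error probability of a variable-length code (φ, ψ). -/
noncomputable def errP {α : Type*} {K : ℕ} (P : Dist α) (φ : α → Word K) (ψ : Word K → α) : ℝ :=
  P.pr {x | ψ (φ x) ≠ x}

/-- Overflow probability of an encoder φ with threshold η. -/
noncomputable def ovP {α : Type*} {K : ℕ} (P : Dist α) (φ : α → Word K) (η : ℝ) : ℝ :=
  P.pr {x | wlen (φ x) > η}

/-- A general source: for each blocklength n, a distribution on 𝒳^n. -/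
abbrev Source (𝒳 : Type*) := (n : ℕ) → Dist (Fin n → 𝒳)

/-- The limit as ν ↓ 0 of a function g which is nonincreasing in ν
(the limit exists by monotonicity and equals the supremum over ν > 0). -/
noncomputable def limNu (g : ℝ → ℝ) : ℝ := sSup (g '' Set.Ioi (0 : ℝ))

variable {𝒳 : Type*}

/-- A rate R ≥ 0 is (ε,δ)-achievable. -/
def FirstAch (K : ℕ) (X : Source 𝒳) (ε δ R : ℝ) : Prop :=
  0 ≤ R ∧ ∃ (φ : ∀ n, (Fin n → 𝒳) → Word K) (ψ : ∀ n, Word K → (Fin n → 𝒳)),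
    limsup (fun n => errP (X n) (φ n) (ψ n)) atTop ≤ ε ∧
    limsup (fun n => ovP (X n) (φ n) ((n : ℝ) * R)) atTop ≤ δ

/-- The first-order (ε,δ)-optimum threshold R(ε,δ|X). -/
noncomputable def Ropt (K : ℕ) (X : Source 𝒳) (ε δ : ℝ) : ℝ :=
  sInf {R | FirstAch K X ε δ R}

/-- L is (ε,δ,R)-achievable (second order). -/
def SecondAch (K : ℕ) (X : Source 𝒳) (ε δ R L : ℝ) : Prop :=
  ∃ (φ : ∀ n, (Fin n → 𝒳) → Word K) (ψ : ∀ n, Word K → (Fin n → 𝒳)),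
    limsup (fun n => errP (X n) (φ n) (ψ n)) atTop ≤ ε ∧
    limsup (fun n => ovP (X n) (φ n) ((n : ℝ) * R + Real.sqrt (n : ℝ) * L)) atTop ≤ δ

/-- The second-order (ε,δ,R)-optimum threshold L(ε,δ,R|X). -/
noncomputable def Lopt (K : ℕ) (X : Source 𝒳) (ε δ R : ℝ) : ℝ :=
  sInf {L | SecondAch K X ε δ R L}

/-- A rate R ≥ 0 is optimistically (ε,δ)-achievable. -/
def OptFirstAch (K : ℕ) (X : Source 𝒳) (ε δ R : ℝ) : Prop :=
  0 ≤ R ∧ ∃ (φ : ∀ n, (Fin n → 𝒳) → Word K) (ψ : ∀ n, Word K → (Fin n → 𝒳)),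
    ∀ γ > (0 : ℝ), ∃ ns : ℕ → ℕ, StrictMono ns ∧ ∀ i,
      errP (X (ns i)) (φ (ns i)) (ψ (ns i)) ≤ ε + γ ∧
      ovP (X (ns i)) (φ (ns i)) ((ns i : ℝ) * R) ≤ δ + γ

/-- The optimistic first-order (ε,δ)-optimum threshold R*(ε,δ|X). -/
noncomputable def RoptStar (K : ℕ) (X : Source 𝒳) (ε δ : ℝ) : ℝ :=
  sInf {R | OptFirstAch K X ε δ R}

/-- L is optimistically (ε,δ,R)-achievable. -/
def OptSecondAch (K : ℕ) (X : Source 𝒳) (ε δ R L : ℝ) : Prop :=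
  ∃ (φ : ∀ n, (Fin n → 𝒳) → Word K) (ψ : ∀ n, Word K → (Fin n → 𝒳)),
    ∀ γ > (0 : ℝ), ∃ ns : ℕ → ℕ, StrictMono ns ∧ ∀ i,
      errP (X (ns i)) (φ (ns i)) (ψ (ns i)) ≤ ε + γ ∧
      ovP (X (ns i)) (φ (ns i)) ((ns i : ℝ) * R + Real.sqrt (ns i : ℝ) * L) ≤ δ + γ

/-- The optimistic second-order (ε,δ,R)-optimum threshold L*(ε,δ,R|X). -/
noncomputable def LoptStar (K : ℕ) (X : Source 𝒳) (ε δ R : ℝ) : ℝ :=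
  sInf {L | OptSecondAch K X ε δ R L}

/-- A rate R ≥ 0 is type I (ε,δ)-achievable. -/
def TypeIAch (K : ℕ) (X : Source 𝒳) (ε δ R : ℝ) : Prop :=
  0 ≤ R ∧ ∃ (φ : ∀ n, (Fin n → 𝒳) → Word K) (ψ : ∀ n, Word K → (Fin n → 𝒳)),
    limsup (fun n => errP (X n) (φ n) (ψ n)) atTop ≤ ε ∧
    liminf (fun n => ovP (X n) (φ n) ((n : ℝ) * R)) atTop ≤ δ

/-- R†(ε,δ|X). -/
noncomputable def Rdagger (K : ℕ) (X : Source 𝒳) (ε δ : ℝ) : ℝ :=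
  sInf {R | TypeIAch K X ε δ R}

/-- A rate R ≥ 0 is type II (ε,δ)-achievable. -/
def TypeIIAch (K : ℕ) (X : Source 𝒳) (ε δ R : ℝ) : Prop :=
  0 ≤ R ∧ ∃ (φ : ∀ n, (Fin n → 𝒳) → Word K) (ψ : ∀ n, Word K → (Fin n → 𝒳)),
    liminf (fun n => errP (X n) (φ n) (ψ n)) atTop ≤ ε ∧
    limsup (fun n => ovP (X n) (φ n) ((n : ℝ) * R)) atTop ≤ δ

/-- R‡(ε,δ|X). -/
noncomputable def Rddagger (K : ℕ) (X : Source 𝒳) (ε δ : ℝ) : ℝ :=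
  sInf {R | TypeIIAch K X ε δ R}

/-- H̄_γ(X) := inf{ R : limsup_n Pr{ (1/n) log(1/P_{X^n}(X^n)) > R } ≤ γ }. -/
noncomputable def Hbar (K : ℕ) (X : Source 𝒳) (γ : ℝ) : ℝ :=
  sInf {R | limsup (fun n =>
    (X n).pr {x | Real.logb (K : ℝ) (1 / (X n).p x) / (n : ℝ) > R}) atTop ≤ γ}

/-- H̄*_γ(X) (optimistic version, with liminf). -/
noncomputable def HbarStar (K : ℕ) (X : Source 𝒳) (γ : ℝ) : ℝ :=
  sInf {R | liminf (fun n =>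
    (X n).pr {x | Real.logb (K : ℝ) (1 / (X n).p x) / (n : ℝ) > R}) atTop ≤ γ}

/-- H̄_γ(R|X) := inf{ L : limsup_n Pr{ (1/n) log(1/P_{X^n}(X^n)) > R + L/√n } ≤ γ }. -/
noncomputable def Hbar2 (K : ℕ) (X : Source 𝒳) (γ R : ℝ) : ℝ :=
  sInf {L | limsup (fun n =>
    (X n).pr {x | Real.logb (K : ℝ) (1 / (X n).p x) / (n : ℝ)
      > R + L / Real.sqrt (n : ℝ)}) atTop ≤ γ}

/-- H̄*_γ(R|X) (optimistic version, with liminf). -/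
noncomputable def Hbar2Star (K : ℕ) (X : Source 𝒳) (γ R : ℝ) : ℝ :=
  sInf {L | liminf (fun n =>
    (X n).pr {x | Real.logb (K : ℝ) (1 / (X n).p x) / (n : ℝ)
      > R + L / Real.sqrt (n : ℝ)}) atTop ≤ γ}

/-- F(ε,R) := limsup_n inf_{A : Pr(A) ≥ 1−ε} Pr{ −(1/n) log P_{X^n}(X^n) ≥ R, X^n ∈ A }. -/
noncomputable def Fspec (K : ℕ) (X : Source 𝒳) (ε R : ℝ) : ℝ :=
  limsup (fun n =>
    sInf ((fun A : Set (Fin n → 𝒳) =>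
        (X n).pr (A ∩ {x | -Real.logb (K : ℝ) ((X n).p x) / (n : ℝ) ≥ R})) ''
      {A | (X n).pr A ≥ 1 - ε})) atTop

/-- H̃_{ε,δ}(X) := inf{ R : F(ε,R) ≤ δ }. -/
noncomputable def Htilde (K : ℕ) (X : Source 𝒳) (ε δ : ℝ) : ℝ :=
  sInf {R | Fspec K X ε R ≤ δ}

/-- G_{ε,δ}(X). -/
noncomputable def Gfirst (K : ℕ) (X : Source 𝒳) (ε δ : ℝ) : ℝ :=
  sInf {R | limNu (fun ν => limsup (fun n =>
    sInf ((fun A : Set (Fin n → 𝒳) =>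
        (X n).pr (A ∩ {x | -Real.logb (K : ℝ) ((X n).p x / (X n).pr A) / (n : ℝ) ≥ R})) ''
      {A | (X n).pr A ≥ 1 - ε - ν})) atTop) ≤ δ}

/-- G*_{ε,δ}(X) (optimistic version, with liminf). -/
noncomputable def GfirstStar (K : ℕ) (X : Source 𝒳) (ε δ : ℝ) : ℝ :=
  sInf {R | limNu (fun ν => liminf (fun n =>
    sInf ((fun A : Set (Fin n → 𝒳) =>
        (X n).pr (A ∩ {x | -Real.logb (K : ℝ) ((X n).p x / (X n).pr A) / (n : ℝ) ≥ R})) ''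
      {A | (X n).pr A ≥ 1 - ε - ν})) atTop) ≤ δ}

/-- G_{ε,δ}(R|X). -/
noncomputable def Gsecond (K : ℕ) (X : Source 𝒳) (ε δ R : ℝ) : ℝ :=
  sInf {L | limNu (fun ν => limsup (fun n =>
    sInf ((fun A : Set (Fin n → 𝒳) =>
        (X n).pr (A ∩ {x | -Real.logb (K : ℝ) ((X n).p x / (X n).pr A) / (n : ℝ)
          ≥ R + L / Real.sqrt (n : ℝ)})) ''
      {A | (X n).pr A ≥ 1 - ε - ν})) atTop) ≤ δ}

/-- G*_{ε,δ}(R|X) (optimistic version, with liminf). -/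
noncomputable def GsecondStar (K : ℕ) (X : Source 𝒳) (ε δ R : ℝ) : ℝ :=
  sInf {L | limNu (fun ν => liminf (fun n =>
    sInf ((fun A : Set (Fin n → 𝒳) =>
        (X n).pr (A ∩ {x | -Real.logb (K : ℝ) ((X n).p x / (X n).pr A) / (n : ℝ)
          ≥ R + L / Real.sqrt (n : ℝ)})) ''
      {A | (X n).pr A ≥ 1 - ε - ν})) atTop) ≤ δ}

/-- A rate R is optimistically ε-achievable by fixed-length codes. -/
def FixAchR (K : ℕ) (X : Source 𝒳) (ε R : ℝ) : Prop :=
  ∃ (M : ℕ → ℕ) (φ : ∀ n, (Fin n → 𝒳) → Fin (M n)) (ψ : ∀ n, Fin (M n) → (Fin n → 𝒳)),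
    ∀ γ > (0 : ℝ), ∃ ns : ℕ → ℕ, StrictMono ns ∧ ∀ i,
      (X (ns i)).pr {x | ψ (ns i) (φ (ns i) x) ≠ x} ≤ ε + γ ∧
      Real.logb (K : ℝ) (M (ns i) : ℝ) / (ns i : ℝ) ≤ R + γ

/-- R^f(ε|X). -/
noncomputable def Rfix (K : ℕ) (X : Source 𝒳) (ε : ℝ) : ℝ :=
  sInf {R | FixAchR K X ε R}

/-- A real L is optimistically (ε,R)-achievable by fixed-length codes. -/
def FixAchL (K : ℕ) (X : Source 𝒳) (ε R L : ℝ) : Prop :=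
  ∃ (M : ℕ → ℕ) (φ : ∀ n, (Fin n → 𝒳) → Fin (M n)) (ψ : ∀ n, Fin (M n) → (Fin n → 𝒳)),
    ∀ γ > (0 : ℝ), ∃ ns : ℕ → ℕ, StrictMono ns ∧ ∀ i,
      (X (ns i)).pr {x | ψ (ns i) (φ (ns i) x) ≠ x} ≤ ε + γ ∧
      Real.logb (K : ℝ) ((M (ns i) : ℝ) / (K : ℝ) ^ ((ns i : ℝ) * R)) / Real.sqrt (ns i : ℝ)
        ≤ L + γ

/-- L^f(ε,R|X). -/
noncomputable def Lfix (K : ℕ) (X : Source 𝒳) (ε R : ℝ) : ℝ :=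
  sInf {L | FixAchL K X ε R L}


section Infra
variable {α : Type*} (P : Dist α)

lemma Dist.summable : Summable P.p := P.hasSum.summable

lemma Dist.tsum_p : ∑' x, P.p x = 1 := P.hasSum.tsum_eq

lemma Dist.pr_eq (A : Set α) : P.pr A = ∑' x, A.indicator P.p x := tsum_subtype A P.p

lemma Dist.summable_ind (A : Set α) : Summable (A.indicator P.p) := P.summable.indicator A

lemma Dist.pr_nonneg (A : Set α) : 0 ≤ P.pr A :=
  tsum_nonneg fun x => P.nonneg x.1

lemma Dist.pr_mono {A B : Set α} (h : A ⊆ B) : P.pr A ≤ P.pr B := by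
  rw [P.pr_eq, P.pr_eq]
  exact Summable.tsum_le_tsum (fun x => Set.indicator_le_indicator_of_subset h (P.nonneg) x)
    (P.summable_ind A) (P.summable_ind B)

lemma Dist.pr_le_one (A : Set α) : P.pr A ≤ 1 := by
  rw [P.pr_eq]
  calc ∑' x, A.indicator P.p x ≤ ∑' x, P.p x :=
        Summable.tsum_le_tsum (fun x => Set.indicator_le_self' (fun y _ => P.nonneg y) x) (P.summable_ind A) P.summable
    _ = 1 := P.tsum_p

lemma Dist.pr_univ : P.pr Set.univ = 1 := by
  rw [P.pr_eq, Set.indicator_univ, P.tsum_p]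

lemma Dist.pr_compl (A : Set α) : P.pr Aᶜ = 1 - P.pr A := by
  have h : ∀ x, A.indicator P.p x + Aᶜ.indicator P.p x = P.p x := by
    intro x
    by_cases hx : x ∈ A <;> simp [Set.indicator_of_mem, Set.indicator_of_notMem, hx]
  have := Summable.tsum_add (P.summable_ind A) (P.summable_ind Aᶜ)
  rw [P.pr_eq, P.pr_eq A]
  have h2 : ∑' x, (A.indicator P.p x + Aᶜ.indicator P.p x) = 1 := by
    simp_rw [h]; exact P.tsum_p
  linarith [this ▸ h2]

lemma Dist.pr_union_le (A B : Set α) : P.pr (A ∪ B) ≤ P.pr A + P.pr B := by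
  rw [P.pr_eq, P.pr_eq, P.pr_eq]
  rw [← Summable.tsum_add (P.summable_ind A) (P.summable_ind B)]
  refine Summable.tsum_le_tsum (fun x => ?_) (P.summable_ind _)
    ((P.summable_ind A).add (P.summable_ind B))
  by_cases hA : x ∈ A <;> by_cases hB : x ∈ B <;>
    simp [Set.indicator_of_mem, Set.indicator_of_notMem, hA, hB, P.nonneg x]

lemma Dist.pr_eq_zero {N : Set α} (h : ∀ x ∈ N, P.p x = 0) : P.pr N = 0 := by
  rw [P.pr_eq]
  have : N.indicator P.p = fun _ => 0 := by
    funext x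
    by_cases hx : x ∈ N
    · rw [Set.indicator_of_mem hx]; exact h x hx
    · exact Set.indicator_of_notMem hx _
  rw [this, tsum_zero]

lemma Dist.single_le_pr {A : Set α} {x : α} (hx : x ∈ A) : P.p x ≤ P.pr A := by
  rw [P.pr_eq]
  have := Summable.le_tsum (P.summable_ind A) x (fun y _ => Set.indicator_nonneg (fun z _ => P.nonneg z) y)
  rwa [Set.indicator_of_mem hx] at this

lemma Dist.pr_inter_pos (A : Set α) : P.pr (A ∩ {x | 0 < P.p x}) = P.pr A := by
  rw [P.pr_eq, P.pr_eq]
  congr 1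
  funext x
  by_cases hp : 0 < P.p x
  · by_cases hA : x ∈ A <;>
      simp [Set.indicator_of_mem, Set.indicator_of_notMem, hA, hp]
  · have hp0 : P.p x = 0 := le_antisymm (not_lt.mp hp) (P.nonneg x)
    by_cases hA : x ∈ A <;>
      simp [Set.indicator, hA, hp0, hp]

lemma Dist.nonempty (Q : Dist α) : Nonempty α := by
  by_contra h
  rw [not_nonempty_iff] at h
  have h1 := Q.tsum_p
  haveI := h
  rw [tsum_empty] at h1
  exact zero_ne_one h1

-- finite sum bound: pr over finite set ≤ card * c
lemma Dist.pr_le_card_mul {T : Set α} (hT : T.Finite) {c : ℝ}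
    (hc : ∀ x ∈ T, P.p x ≤ c) : P.pr T ≤ hT.toFinset.card * c := by
  rw [P.pr_eq]
  have h1 : ∑' x, T.indicator P.p x = ∑ x ∈ hT.toFinset, T.indicator P.p x := by
    refine tsum_eq_sum (fun x hx => ?_)
    have : x ∉ T := by simpa using hx
    simp [Set.indicator_of_notMem this]
  rw [h1]
  calc ∑ x ∈ hT.toFinset, T.indicator P.p x ≤ ∑ _x ∈ hT.toFinset, c := by
        refine Finset.sum_le_sum (fun x hx => ?_)
        have hxT : x ∈ T := by simpa using hx
        rw [Set.indicator_of_mem hxT]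
        exact hc x hxT
    _ = hT.toFinset.card * c := by rw [Finset.sum_const, nsmul_eq_mul]

-- points with p > c within a set: finite with card bound
lemma Dist.finite_gt {A : Set α} {c : ℝ} (hc : 0 < c) :
    (A ∩ {x | c < P.p x}).Finite := by
  by_contra hinf
  have hinf : (A ∩ {x | c < P.p x}).Infinite := hinf
  obtain ⟨F, hFsub, hFcard⟩ := hinf.exists_subset_card_eq (⌈1/c⌉₊ + 1)
  have hsum : (F.card : ℝ) * c ≤ 1 := by
    calc (F.card : ℝ) * c = ∑ _x ∈ F, c := by rw [Finset.sum_const, nsmul_eq_mul]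
      _ ≤ ∑ x ∈ F, P.p x := Finset.sum_le_sum (fun x hx => (hFsub hx).2.le)
      _ ≤ ∑' x, P.p x := Summable.sum_le_tsum F (fun x _ => P.nonneg x) P.summable
      _ = 1 := P.tsum_p
  rw [hFcard] at hsum
  have h1 : (1:ℝ)/c ≤ ⌈1/c⌉₊ := Nat.le_ceil _
  have h2 : (1:ℝ) ≤ (⌈1/c⌉₊:ℝ) * c := by
    have := mul_le_mul_of_nonneg_right h1 hc.le
    rwa [div_mul_cancel₀ _ (ne_of_gt hc)] at this
  push_cast at hsum
  nlinarith

lemma Dist.card_le_of_gt {A : Set α} {c : ℝ} (hc : 0 < c)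
    (hfin : (A ∩ {x | c < P.p x}).Finite) :
    (hfin.toFinset.card : ℝ) * c ≤ P.pr A := by
  calc (hfin.toFinset.card : ℝ) * c = ∑ _x ∈ hfin.toFinset, c := by
        rw [Finset.sum_const, nsmul_eq_mul]
    _ ≤ ∑ x ∈ hfin.toFinset, P.p x := by
        refine Finset.sum_le_sum (fun x hx => ?_)
        exact (hfin.mem_toFinset.mp hx).2.le
    _ = ∑ x ∈ hfin.toFinset, A.indicator P.p x := by
        refine Finset.sum_congr rfl (fun x hx => ?_)
        exact (Set.indicator_of_mem (hfin.mem_toFinset.mp hx).1 _).symm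
    _ ≤ P.pr A := by
        rw [P.pr_eq]
        exact Summable.sum_le_tsum _ (fun x _ => Set.indicator_nonneg (fun z _ => P.nonneg z) x)
          (P.summable_ind A)

end Infra

section Infra2
open Real


lemma thresh_mul (n : ℕ) (hn : 0 < n) (R L : ℝ) :
    (R + L / Real.sqrt n) * n = (n:ℝ) * R + Real.sqrt n * L := by
  have h : Real.sqrt n * Real.sqrt n = (n:ℝ) := Real.mul_self_sqrt (by positivity)
  have hs : (0:ℝ) < Real.sqrt n := Real.sqrt_pos.mpr (by exact_mod_cast hn)
  have h2 : L / Real.sqrt n * (n:ℝ) = L * Real.sqrt n := by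
    field_simp
    linear_combination (-L) * h
  rw [add_mul, h2]
  ring

lemma neg_logb_ge_iff {K : ℕ} (hK : 2 ≤ K) {a q : ℝ} (ha : 0 < a) (hq : 0 < q) (θ : ℝ) :
    θ ≤ -Real.logb K (a / q) ↔ a ≤ q * (K:ℝ) ^ (-θ) := by
  have hb : (1:ℝ) < K := by exact_mod_cast Nat.lt_of_lt_of_le one_lt_two hK
  rw [le_neg, Real.logb_le_iff_le_rpow hb (div_pos ha hq), div_le_iff₀ hq, mul_comm]

lemma sqrt_nat_tendsto : Filter.Tendsto (fun n : ℕ => Real.sqrt n) atTop atTop := by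
  rw [Filter.tendsto_atTop_atTop]
  intro b
  refine ⟨⌈b*b⌉₊, fun n hn => ?_⟩
  rcases le_or_gt b 0 with hb | hb
  · exact hb.trans (Real.sqrt_nonneg _)
  · have h1 : b*b ≤ (n:ℝ) := le_trans (Nat.le_ceil _) (by exact_mod_cast hn)
    calc b = Real.sqrt (b*b) := (Real.sqrt_mul_self hb.le).symm
      _ ≤ Real.sqrt n := Real.sqrt_le_sqrt h1

/-- Bijective base-K numeration of lists over Fin K. -/
def valNat {K : ℕ} : List (Fin K) → ℕ
  | [] => 0
  | a :: l => (a : ℕ) + 1 + K * valNat l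

lemma valNat_injective {K : ℕ} : Function.Injective (valNat (K := K)) := by
  intro l1
  induction l1 with
  | nil =>
      intro l2 h
      cases l2 with
      | nil => rfl
      | cons b l2' => simp only [valNat] at h; omega
  | cons a l1' ih =>
      intro l2 h
      cases l2 with
      | nil => simp only [valNat] at h; omega
      | cons b l2' =>
          simp only [valNat] at h
          have ha : (a:ℕ) < K := a.2
          have hb : (b:ℕ) < K := b.2
          have h' : (a:ℕ) + 1 + K * valNat l1' - 1 = (b:ℕ) + 1 + K * valNat l2' - 1 := by omega
          have h1 : (a:ℕ) + K * valNat l1' = (b:ℕ) + K * valNat l2' := by omega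
          have hmod : ((a:ℕ) + K * valNat l1') % K = ((b:ℕ) + K * valNat l2') % K := by rw [h1]
          rw [Nat.add_mul_mod_self_left, Nat.add_mul_mod_self_left,
            Nat.mod_eq_of_lt ha, Nat.mod_eq_of_lt hb] at hmod
          have hK0 : 0 < K := lt_of_le_of_lt (Nat.zero_le _) ha
          have hab : (a:ℕ) = (b:ℕ) := hmod
          have hv : valNat l1' = valNat l2' := by
            have : K * valNat l1' = K * valNat l2' := by omega
            exact Nat.eq_of_mul_eq_mul_left hK0 this
          rw [ih hv, Fin.ext hab]

lemma valNat_lt {K : ℕ} (hK : 2 ≤ K) (l : List (Fin K)) :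
    valNat l ≤ K ^ (l.length + 1) := by
  have hKR : (1:ℝ) ≤ (K:ℝ) := by exact_mod_cast le_trans one_le_two hK
  have key : ∀ l : List (Fin K), ((K:ℝ) - 1) * valNat l ≤ (K:ℝ) ^ (l.length + 1) - K := by
    intro l
    induction l with
    | nil => simp [valNat]
    | cons a l ih =>
        have ha : ((a:ℕ):ℝ) + 1 ≤ (K:ℝ) := by exact_mod_cast a.2
        have hv0 : (0:ℝ) ≤ (valNat l : ℝ) := by positivity
        have hp : (K:ℝ) ≤ (K:ℝ) ^ (l.length + 1) := le_self_pow₀ hKR (by omega)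
        simp only [valNat, List.length_cons]
        have t1 : (K:ℝ) * (((K:ℝ)-1) * valNat l) ≤ (K:ℝ) * ((K:ℝ)^(l.length+1) - K) :=
          mul_le_mul_of_nonneg_left ih (by positivity)
        have t2 : ((K:ℝ)-1) * (((a:ℕ):ℝ)+1) ≤ ((K:ℝ)-1) * K :=
          mul_le_mul_of_nonneg_left ha (by linarith)
        push_cast
        calc ((K:ℝ)-1) * (((a:ℕ):ℝ) + 1 + (K:ℝ) * (valNat l : ℝ))
            = ((K:ℝ)-1)*(((a:ℕ):ℝ)+1) + (K:ℝ)*(((K:ℝ)-1) * valNat l) := by ring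
          _ ≤ ((K:ℝ)-1)*K + (K:ℝ)*((K:ℝ)^(l.length+1) - K) := add_le_add t2 t1
          _ = (K:ℝ)^(l.length+1+1) - K := by ring
  have h1 := key l
  have h2 : (valNat l : ℝ) ≤ ((K:ℝ) - 1) * valNat l := by
    have : (1:ℝ) ≤ (K:ℝ) - 1 := by
      have : (2:ℝ) ≤ (K:ℝ) := by exact_mod_cast hK
      linarith
    nlinarith [show (0:ℝ) ≤ (valNat l : ℝ) by positivity]
  have h3 : (valNat l : ℝ) ≤ (K:ℝ) ^ (l.length + 1) := by
    have hKpos : (0:ℝ) ≤ (K:ℝ) := by positivity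
    linarith
  exact_mod_cast h3

lemma pr_short_le {α : Type*} (P : Dist α) {K : ℕ} (hK : 2 ≤ K) {φ : α → Word K} {T : Set α}
    (hinj : Set.InjOn φ T) {θ c : ℝ} (hc : 0 ≤ c)
    (hp : ∀ x ∈ T, P.p x ≤ c) (hlen : ∀ x ∈ T, ((φ x).1.length : ℝ) ≤ θ) :
    P.pr T ≤ (K:ℝ) ^ (θ + 2) * c := by
  have hKR : (1:ℝ) ≤ (K:ℝ) := by exact_mod_cast le_trans one_le_two hK
  rcases lt_or_ge θ 0 with hθ | hθ0
  · have hT : T = ∅ := by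
      ext x
      simp only [Set.mem_empty_iff_false, iff_false]
      intro hx
      have := hlen x hx
      have : (0:ℝ) ≤ ((φ x).1.length : ℝ) := by positivity
      linarith [hlen x hx]
    rw [hT]
    have h0 : P.pr (∅ : Set α) = 0 := P.pr_eq_zero (by simp)
    rw [h0]
    positivity
  · set M := ⌊θ⌋₊ with hM
    have hlenM : ∀ x ∈ T, (φ x).1.length ≤ M := fun x hx => Nat.le_floor (hlen x hx)
    -- injection into Fin (K^(M+1)+1)
    set f : α → ℕ := fun x => valNat (φ x).1 with hf
    have hfinj : Set.InjOn f T := by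
      intro x hx y hy hxy
      exact hinj hx hy (Subtype.ext (valNat_injective hxy))
    have hfbd : ∀ x ∈ T, f x < K ^ (M+1) + 1 := by
      intro x hx
      have h1 := valNat_lt hK (φ x).1
      have h2 : K ^ ((φ x).1.length + 1) ≤ K ^ (M + 1) :=
        Nat.pow_le_pow_right (by omega) (by have := hlenM x hx; omega)
      show valNat (φ x).1 < K ^ (M+1) + 1
      omega
    have himg : f '' T ⊆ Set.Iio (K ^ (M+1) + 1) := by
      rintro _ ⟨x, hx, rfl⟩
      exact hfbd x hx
    have hTfin : T.Finite := Set.Finite.of_finite_image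
      ((Set.finite_Iio _).subset himg) hfinj
    have hcard : hTfin.toFinset.card ≤ K ^ (M+1) + 1 := by
      have h1 : (hTfin.toFinset.image f).card = hTfin.toFinset.card := by
        apply Finset.card_image_of_injOn
        intro x hx y hy
        exact hfinj (hTfin.mem_toFinset.mp hx) (hTfin.mem_toFinset.mp hy)
      have h2 : hTfin.toFinset.image f ⊆ Finset.range (K ^ (M+1) + 1) := by
        intro m hm
        obtain ⟨x, hx, rfl⟩ := Finset.mem_image.mp hm
        exact Finset.mem_range.mpr (hfbd x (hTfin.mem_toFinset.mp hx))
      calc hTfin.toFinset.card = (hTfin.toFinset.image f).card := h1.symm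
        _ ≤ (Finset.range (K ^ (M+1) + 1)).card := Finset.card_le_card h2
        _ = K ^ (M+1) + 1 := Finset.card_range _
    have hbound := P.pr_le_card_mul hTfin hp
    have hcardR : (hTfin.toFinset.card : ℝ) ≤ (K:ℝ) ^ (θ + 2) := by
      calc (hTfin.toFinset.card : ℝ) ≤ ((K ^ (M+1) + 1 : ℕ) : ℝ) := by exact_mod_cast hcard
        _ ≤ (K:ℝ) ^ ((M:ℝ) + 2) := by
            push_cast
            have h1 : (K:ℝ) ^ (M+1) + 1 ≤ 2 * (K:ℝ) ^ (M+1) := by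
              nlinarith [one_le_pow₀ hKR (n := M+1)]
            have h2 : 2 * (K:ℝ) ^ (M+1) ≤ (K:ℝ) * (K:ℝ) ^ (M+1) := by
              have hK2 : (2:ℝ) ≤ (K:ℝ) := by exact_mod_cast hK
              nlinarith [one_le_pow₀ hKR (n := M+1)]
            calc ((K:ℝ) ^ (M+1) + 1) ≤ (K:ℝ) * (K:ℝ) ^ (M+1) := by linarith
              _ = (K:ℝ) ^ (M+2) := by ring
              _ = (K:ℝ) ^ ((M:ℝ) + 2) := by
                  rw [← Real.rpow_natCast (K:ℝ) (M+2)]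
                  norm_num
        _ ≤ (K:ℝ) ^ (θ + 2) := by
            apply Real.rpow_le_rpow_of_exponent_le hKR
            have := Nat.floor_le hθ0
            linarith
    calc P.pr T ≤ (hTfin.toFinset.card : ℝ) * c := hbound
      _ ≤ (K:ℝ) ^ (θ + 2) * c := by
          apply mul_le_mul_of_nonneg_right _ hc
          exact hcardR


end Infra2

section Main
open Real

variable {𝒳 : Type*}

lemma le_add_all {a b : ℝ} (h : ∀ c > 0, a ≤ b + c) : a ≤ b := by
  by_contra hlt
  push_neg at hlt
  have := h ((a-b)/2) (by linarith)
  linarith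

/-- The inner quantity in GsecondStar. -/
noncomputable def innerInf (K : ℕ) (X : Source 𝒳) (ε R L : ℝ) (ν : ℝ) (n : ℕ) : ℝ :=
  sInf ((fun A : Set (Fin n → 𝒳) =>
      (X n).pr (A ∩ {x | -Real.logb (K : ℝ) ((X n).p x / (X n).pr A) / (n : ℝ)
        ≥ R + L / Real.sqrt (n : ℝ)})) ''
    {A | (X n).pr A ≥ 1 - ε - ν})

lemma innerInf_nonneg (K : ℕ) (X : Source 𝒳) (ε R L ν : ℝ) (n : ℕ) :
    0 ≤ innerInf K X ε R L ν n := by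
  apply Real.sInf_nonneg
  rintro y ⟨A, _, rfl⟩
  exact (X n).pr_nonneg _

lemma innerInf_le_one (K : ℕ) (X : Source 𝒳) {ε R L ν : ℝ} (hε : 0 ≤ ε) (hν : 0 ≤ ν) (n : ℕ) :
    innerInf K X ε R L ν n ≤ 1 := by
  have hmem : (1 : ℝ) - ε - ν ≤ (X n).pr Set.univ := by
    rw [(X n).pr_univ]; linarith
  refine le_trans (csInf_le ⟨0, ?_⟩ ⟨Set.univ, hmem, rfl⟩) ?_
  · rintro y ⟨A, _, rfl⟩
    exact (X n).pr_nonneg _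
  · exact (X n).pr_le_one _

lemma GsecondStar_eq (K : ℕ) (X : Source 𝒳) (ε δ R : ℝ) (hε : 0 ≤ ε) (hδ : 0 ≤ δ) :
    {L : ℝ | limNu (fun ν => liminf (fun n =>
      sInf ((fun A : Set (Fin n → 𝒳) =>
          (X n).pr (A ∩ {x | -Real.logb (K : ℝ) ((X n).p x / (X n).pr A) / (n : ℝ)
            ≥ R + L / Real.sqrt (n : ℝ)})) ''
        {A | (X n).pr A ≥ 1 - ε - ν})) atTop) ≤ δ}
    = {L : ℝ | ∀ ν > 0, liminf (fun n => innerInf K X ε R L ν n) atTop ≤ δ} := by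
  ext L
  simp only [Set.mem_setOf_eq]
  constructor
  · intro h ν hν
    refine le_trans ?_ h
    apply le_csSup
    · refine ⟨1, ?_⟩
      rintro y ⟨ν', hν', rfl⟩
      refine liminf_le_of_frequently_le (Frequently.of_forall fun n => ?_) ?_
      · exact innerInf_le_one K X hε (le_of_lt hν') n
      · exact Filter.isBoundedUnder_of ⟨0, fun n : ℕ => innerInf_nonneg K X ε R L ν' n⟩
    · exact ⟨ν, hν, rfl⟩
  · intro h
    apply Real.sSup_le _ hδ
    rintro y ⟨ν, hν, rfl⟩
    exact h ν hν

/-- Converse part. -/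
lemma converse_liminf_le {K : ℕ} (hK : 2 ≤ K) (X : Source 𝒳) {R ε δ L ν t : ℝ}
    (hδ0 : 0 ≤ δ) (hε0 : 0 ≤ ε) (hν : 0 < ν) (ht : 0 < t)
    (hach : OptSecondAch K X ε δ R L) :
    liminf (fun n => innerInf K X ε R (L + t) ν n) atTop ≤ δ := by
  obtain ⟨φ, ψ, hcode⟩ := hach
  have hKR1 : (1:ℝ) < (K:ℝ) := by exact_mod_cast Nat.lt_of_lt_of_le one_lt_two hK
  have hKR0 : (0:ℝ) < (K:ℝ) := lt_trans one_pos hKR1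
  apply le_add_all
  intro c hc
  refine liminf_le_of_frequently_le ?_
    (Filter.isBoundedUnder_of ⟨0, fun n : ℕ => innerInf_nonneg K X ε R (L+t) ν n⟩)
  rw [Filter.frequently_atTop]
  intro N
  -- subsequence with small error and overflow
  set γ := min ν (c/2) with hγdef
  have hγ : 0 < γ := lt_min hν (by linarith)
  obtain ⟨ns, hmono, hbd⟩ := hcode γ hγ
  -- the tail term tends to 0
  have htail : Tendsto (fun i : ℕ => (K:ℝ) ^ ((2:ℝ) - Real.sqrt (ns i) * t)) atTop (nhds 0) := by
    have h1 : Tendsto (fun i : ℕ => Real.sqrt (ns i)) atTop atTop :=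
      sqrt_nat_tendsto.comp hmono.tendsto_atTop
    have h1' : Tendsto (fun i : ℕ => Real.sqrt (ns i) * t) atTop atTop :=
      h1.atTop_mul_const ht
    have h2 : Tendsto (fun i : ℕ => (2:ℝ) - Real.sqrt (ns i) * t) atTop atBot := by
      have h3 := tendsto_atBot_add_const_right atTop (2:ℝ) (tendsto_neg_atTop_atBot.comp h1')
      simpa [sub_eq_neg_add, Function.comp_def] using h3
    exact (tendsto_rpow_atBot_of_base_gt_one (K:ℝ) hKR1).comp h2
  have hev : ∀ᶠ i : ℕ in atTop, (K:ℝ) ^ ((2:ℝ) - Real.sqrt (ns i) * t) ≤ c/2 :=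
    htail.eventually_le_const (show (0:ℝ) < c/2 by linarith)
  obtain ⟨i₀, hi₀⟩ := Filter.eventually_atTop.mp hev
  set i := max i₀ (max N 1) with hidef
  set n := ns i with hndef
  have hnN : n ≥ N := le_trans (le_trans (le_max_left N 1) (le_max_right i₀ _)) (hmono.le_apply)
  have hn1 : 1 ≤ n := le_trans (le_trans (le_max_right N 1) (le_max_right i₀ _)) (hmono.le_apply)
  have hn0 : (0:ℝ) < (n:ℝ) := by exact_mod_cast hn1
  have hsq : (0:ℝ) < Real.sqrt n := Real.sqrt_pos.mpr hn0
  refine ⟨n, hnN, ?_⟩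
  -- the code at blocklength n
  obtain ⟨herr, hov⟩ := hbd i
  set P := X n with hPdef
  set A : Set (Fin n → 𝒳) := {x | ψ n (φ n x) = x} with hAdef
  have hcompl : {x | ψ n (φ n x) ≠ x} = Aᶜ := rfl
  have hprA : P.pr A = 1 - errP P (φ n) (ψ n) := by
    rw [errP, hcompl, P.pr_compl]; ring
  have hA1 : P.pr A ≥ 1 - ε - ν := by
    rw [hprA]
    have : errP P (φ n) (ψ n) ≤ ε + γ := herr
    have : γ ≤ ν := min_le_left _ _
    linarith [herr, min_le_left ν (c/2)]
  set θ : ℝ := (n:ℝ) * R + Real.sqrt n * L with hθdef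
  set θ' : ℝ := (n:ℝ) * R + Real.sqrt n * (L + t) with hθ'def
  have hθθ' : θ' = θ + Real.sqrt n * t := by rw [hθdef, hθ'def]; ring
  set B : Set (Fin n → 𝒳) :=
    {x | -Real.logb (K : ℝ) (P.p x / P.pr A) / (n : ℝ) ≥ R + (L+t) / Real.sqrt (n : ℝ)} with hBdef
  -- innerInf ≤ pr (A ∩ B)
  have hinf_le : innerInf K X ε R (L+t) ν n ≤ P.pr (A ∩ B) := by
    apply csInf_le
    · refine ⟨0, ?_⟩
      rintro y ⟨A', _, rfl⟩
      exact P.pr_nonneg _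
    · exact ⟨A, hA1, rfl⟩
  -- split
  have hsplit : A ∩ B ⊆ {x | wlen (φ n x) > θ} ∪ ((A ∩ B) ∩ {x | wlen (φ n x) ≤ θ}) := by
    intro x hx
    by_cases hl : wlen (φ n x) > θ
    · exact Or.inl hl
    · exact Or.inr ⟨hx, not_lt.mp hl⟩
  have hstep : P.pr (A ∩ B) ≤ P.pr {x | wlen (φ n x) > θ}
      + P.pr ((A ∩ B) ∩ {x | wlen (φ n x) ≤ θ}) :=
    le_trans (P.pr_mono hsplit) (P.pr_union_le _ _)
  have hov' : P.pr {x | wlen (φ n x) > θ} ≤ δ + γ := hov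
  -- bound the short part
  have hinjA : Set.InjOn (φ n) A := by
    intro x hx y hy hxy
    have hx' : ψ n (φ n x) = x := hx
    have hy' : ψ n (φ n y) = y := hy
    rw [← hx', ← hy', hxy]
  have hshort : P.pr ((A ∩ B) ∩ {x | wlen (φ n x) ≤ θ})
      ≤ (K:ℝ) ^ (θ + 2) * (K:ℝ) ^ (-θ') := by
    apply pr_short_le P hK
    · exact hinjA.mono (fun x hx => hx.1.1)
    · positivity
    · -- p x ≤ K^(-θ')
      rintro x ⟨⟨hxA, hxB⟩, _⟩
      rcases eq_or_lt_of_le (P.nonneg x) with hpx | hpx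
      · rw [← hpx]; positivity
      · have hPA : 0 < P.pr A := lt_of_lt_of_le hpx (P.single_le_pr hxA)
        have hxB' : R + (L+t) / Real.sqrt n ≤ -Real.logb K (P.p x / P.pr A) / (n:ℝ) := hxB
        have h1 : (R + (L+t) / Real.sqrt n) * (n:ℝ) ≤ -Real.logb K (P.p x / P.pr A) := by
          rw [← le_div_iff₀ hn0]
          exact hxB'
        rw [thresh_mul n hn1 R (L+t)] at h1
        have h2 : P.p x ≤ P.pr A * (K:ℝ) ^ (-θ') :=
          (neg_logb_ge_iff hK hpx hPA θ').mp h1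
        calc P.p x ≤ P.pr A * (K:ℝ) ^ (-θ') := h2
          _ ≤ 1 * (K:ℝ) ^ (-θ') := by
              apply mul_le_mul_of_nonneg_right (P.pr_le_one A)
              positivity
          _ = (K:ℝ) ^ (-θ') := one_mul _
    · rintro x ⟨_, hx⟩
      exact hx
  have hpow : (K:ℝ) ^ (θ + 2) * (K:ℝ) ^ (-θ') = (K:ℝ) ^ ((2:ℝ) - Real.sqrt n * t) := by
    rw [← Real.rpow_add hKR0, hθθ']
    ring_nf
  have htail' : (K:ℝ) ^ ((2:ℝ) - Real.sqrt n * t) ≤ c/2 :=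
    hi₀ i (le_max_left _ _)
  have hγ2 : γ ≤ c/2 := min_le_right _ _
  calc innerInf K X ε R (L+t) ν n ≤ P.pr (A ∩ B) := hinf_le
    _ ≤ (δ + γ) + (K:ℝ) ^ ((2:ℝ) - Real.sqrt n * t) := by
        rw [← hpow]
        exact le_trans hstep (add_le_add hov' hshort)
    _ ≤ δ + c := by linarith


/-- Achievability: at infinitely many blocklengths there is a good code. -/
lemma exists_good_code {K : ℕ} (hK : 2 ≤ K) [Countable 𝒳] (X : Source 𝒳) {R ε δ L t ν' : ℝ}
    (hε0 : 0 ≤ ε) (hδ0 : 0 ≤ δ) (ht : 0 < t)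
    (hν'0 : 0 < ν') (hν'3 : ν' ≤ (1 - ε - δ)/3) (hεδ : ε + δ < 1)
    (hG : liminf (fun n => innerInf K X ε R L ν' n) atTop ≤ δ) (N : ℕ) :
    ∃ n ≥ N, ∃ (φ : (Fin n → 𝒳) → Word K) (ψ : Word K → (Fin n → 𝒳)),
      errP (X n) φ ψ ≤ ε + ν' ∧
      ovP (X n) φ ((n:ℝ) * R + Real.sqrt (n:ℝ) * (L + t)) ≤ δ + ν' := by
  classical
  have hKR1 : (1:ℝ) < (K:ℝ) := by exact_mod_cast Nat.lt_of_lt_of_le one_lt_two hK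
  have hKR0 : (0:ℝ) < (K:ℝ) := lt_trans one_pos hKR1
  have hK0 : 0 < K := lt_of_lt_of_le two_pos hK
  -- frequently the inner inf is < δ + ν'
  have hfreq : ∃ᶠ n in atTop, innerInf K X ε R L ν' n < δ + ν' := by
    apply frequently_lt_of_liminf_lt
    · exact IsBoundedUnder.isCoboundedUnder_ge
        (Filter.isBoundedUnder_of ⟨1, fun n : ℕ => innerInf_le_one K X hε0 hν'0.le n⟩)
    · linarith
  -- pick a large such n
  set N₁ := max N (max 1 (⌈(2/t)^2⌉₊ + 1)) with hN₁
  obtain ⟨n, hnN₁, hn⟩ := Filter.frequently_atTop.mp hfreq N₁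
  have hnN : n ≥ N := le_trans (le_max_left _ _) hnN₁
  have hn1 : 1 ≤ n := le_trans (le_trans (le_max_left 1 _) (le_max_right _ _)) hnN₁
  have hn0 : (0:ℝ) < (n:ℝ) := by exact_mod_cast hn1
  have hsq : (0:ℝ) < Real.sqrt n := Real.sqrt_pos.mpr hn0
  have hsqt : 2 ≤ Real.sqrt n * t := by
    have h1 : ((2/t)^2 : ℝ) ≤ (n:ℝ) := by
      have h2 : (⌈(2/t)^2⌉₊ : ℝ) ≤ (n:ℝ) := by
        have : ⌈(2/t)^2⌉₊ ≤ n :=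
          le_trans (le_trans (Nat.le_succ _) (le_trans (le_max_right 1 _) (le_max_right N _))) hnN₁
        exact_mod_cast this
      exact le_trans (Nat.le_ceil _) h2
    have h3 : (2/t : ℝ) ≤ Real.sqrt n := by
      have := Real.sqrt_le_sqrt h1
      rwa [Real.sqrt_sq (by positivity)] at this
    calc (2:ℝ) = (2/t) * t := by field_simp
      _ ≤ Real.sqrt n * t := mul_le_mul_of_nonneg_right h3 ht.le
  -- extract a good set A
  set P := X n with hP
  have himg_ne : ((fun A : Set (Fin n → 𝒳) =>
      P.pr (A ∩ {x | -Real.logb (K : ℝ) (P.p x / P.pr A) / (n : ℝ)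
        ≥ R + L / Real.sqrt (n : ℝ)})) ''
    {A | P.pr A ≥ 1 - ε - ν'}).Nonempty := by
    refine ⟨_, ⟨Set.univ, ?_, rfl⟩⟩
    show P.pr Set.univ ≥ 1 - ε - ν'
    rw [P.pr_univ]
    linarith
  obtain ⟨y, ⟨A, hA1, rfl⟩, hy⟩ := exists_lt_of_csInf_lt himg_ne hn
  set B : Set (Fin n → 𝒳) :=
    {x | -Real.logb (K : ℝ) (P.p x / P.pr A) / (n : ℝ) ≥ R + L / Real.sqrt (n : ℝ)} with hB
  have hA1' : P.pr A ≥ 1 - ε - ν' := hA1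
  have hPA : 0 < P.pr A := by
    have : (0:ℝ) < 1 - ε - ν' := by linarith
    linarith
  set θ : ℝ := (n:ℝ) * R + Real.sqrt n * L with hθ
  have hRL : R + L / Real.sqrt n = θ / n := by
    rw [eq_div_iff hn0.ne']
    exact thresh_mul n hn1 R L
  -- θ must be positive
  have hθpos : 0 < θ := by
    by_contra hle
    push_neg at hle
    have hsub : A ∩ {x | 0 < P.p x} ⊆ A ∩ B := by
      rintro x ⟨hxA, hxp⟩
      refine ⟨hxA, ?_⟩
      show R + L / Real.sqrt n ≤ -Real.logb K (P.p x / P.pr A) / (n:ℝ)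
      have h1 : P.p x / P.pr A ≤ 1 := by
        rw [div_le_one hPA]
        exact P.single_le_pr hxA
      have h2 : Real.logb K (P.p x / P.pr A) ≤ 0 :=
        Real.logb_nonpos hKR1 (div_nonneg (P.nonneg x) hPA.le) h1
      have h3 : (0:ℝ) ≤ -Real.logb K (P.p x / P.pr A) / (n:ℝ) := by
        apply div_nonneg _ hn0.le
        linarith
      have h4 : R + L / Real.sqrt n ≤ 0 := by
        rw [hRL]
        exact div_nonpos_of_nonpos_of_nonneg hle hn0.le
      linarith
    have h5 : P.pr A ≤ P.pr (A ∩ B) := by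
      calc P.pr A = P.pr (A ∩ {x | 0 < P.p x}) := (P.pr_inter_pos A).symm
        _ ≤ P.pr (A ∩ B) := P.pr_mono hsub
    linarith
  -- the high-probability finite set S
  set c : ℝ := P.pr A * (K:ℝ) ^ (-θ) with hc
  have hc0 : 0 < c := by positivity
  have hSfin : (A ∩ {x | c < P.p x}).Finite := P.finite_gt hc0
  set S := A ∩ {x | c < P.p x} with hS
  have hcard : (hSfin.toFinset.card : ℝ) * c ≤ P.pr A := P.card_le_of_gt hc0 hSfin
  set m := ⌈θ⌉₊ with hm
  have hm1 : 1 ≤ m := Nat.one_le_iff_ne_zero.mpr (by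
    simp only [hm, ne_eq, Nat.ceil_eq_zero, not_le]
    exact hθpos)
  have hcardle : hSfin.toFinset.card ≤ K ^ m := by
    have h1 : (hSfin.toFinset.card : ℝ) ≤ (K:ℝ) ^ θ := by
      rw [← le_div_iff₀ hc0] at hcard
      refine le_trans hcard ?_
      rw [hc, Real.rpow_neg hKR0.le]
      rw [div_mul_eq_div_div, div_self hPA.ne', one_div, inv_inv]
    have h2 : ((K ^ m : ℕ) : ℝ) = (K:ℝ) ^ (m:ℝ) := by
      rw [Real.rpow_natCast]; push_cast; ring
    have h3 : (K:ℝ) ^ θ ≤ (K:ℝ) ^ (m:ℝ) :=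
      Real.rpow_le_rpow_of_exponent_le hKR1.le (Nat.le_ceil θ)
    exact_mod_cast le_trans h1 (le_trans h3 h2.ge)
  -- embedding of S into Fin m → Fin K
  haveI hft : Fintype S := hSfin.fintype
  have hcardS : Fintype.card S ≤ Fintype.card (Fin m → Fin K) := by
    rw [Fintype.card_fun, Fintype.card_fin, Fintype.card_fin]
    have : Fintype.card S = hSfin.toFinset.card := (Set.Finite.card_toFinset hSfin).symm
    omega
  obtain ⟨emb⟩ := Function.Embedding.nonempty_of_card_le hcardS
  -- pieces of the code
  have h0K : (0:ℕ) < K := hK0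
  obtain ⟨ι, hι⟩ := exists_injective_nat (Fin n → 𝒳)
  set short : S → Word K := fun x => ⟨List.ofFn (emb x), by
    intro h
    have := congrArg List.length h
    rw [List.length_ofFn] at this
    simp at this
    omega⟩ with hshort
  set w₀ : Word K := ⟨List.replicate (m+1) ⟨0, h0K⟩, by
    intro h
    have := congrArg List.length h
    rw [List.length_replicate] at this
    simp at this⟩ with hw₀
  set long : (Fin n → 𝒳) → Word K := fun x => ⟨List.replicate (m+2+ι x) ⟨0, h0K⟩, by
    intro h
    have := congrArg List.length h
    rw [List.length_replicate] at this
    simp at this⟩ with hlong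
  set φ : (Fin n → 𝒳) → Word K := fun x =>
    if hx : x ∈ S then short ⟨x, hx⟩
    else if x ∈ A ∧ 0 < P.p x then long x else w₀ with hφ
  have hlen_short : ∀ x : S, (φ x.1).1.length = m := by
    intro x
    rw [hφ]
    simp only [x.2, dif_pos]
    show (short ⟨x.1, x.2⟩).1.length = m
    rw [hshort]
    exact List.length_ofFn
  have hlen_long : ∀ x, x ∉ S → (x ∈ A ∧ 0 < P.p x) → (φ x).1.length = m + 2 + ι x := by
    intro x hx h2
    rw [hφ]
    simp only [hx, dif_neg, not_false_iff, h2, if_pos]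
    exact List.length_replicate
  -- injectivity on G := A ∩ {0 < p}
  have hinj : Set.InjOn φ (A ∩ {x | 0 < P.p x}) := by
    rintro x ⟨hxA, hxp⟩ y ⟨hyA, hyp⟩ hxy
    by_cases hxS : x ∈ S <;> by_cases hyS : y ∈ S
    · have h1 : (short ⟨x, hxS⟩).1 = (short ⟨y, hyS⟩).1 := by
        rw [hφ] at hxy
        simp only [hxS, hyS, dif_pos] at hxy
        exact congrArg Subtype.val hxy
      rw [hshort] at h1
      have h2 := List.ofFn_injective h1
      have h3 := emb.injective h2
      exact congrArg Subtype.val h3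
    · exfalso
      have l1 : (φ x).1.length = m := hlen_short ⟨x, hxS⟩
      have l2 : (φ y).1.length = m + 2 + ι y := hlen_long y hyS ⟨hyA, hyp⟩
      rw [hxy] at l1
      omega
    · exfalso
      have l1 : (φ x).1.length = m + 2 + ι x := hlen_long x hxS ⟨hxA, hxp⟩
      have l2 : (φ y).1.length = m := hlen_short ⟨y, hyS⟩
      rw [hxy] at l1
      omega
    · have l1 : (φ x).1 = List.replicate (m+2+ι x) ⟨0, h0K⟩ := by
        rw [hφ]; simp only [hxS, dif_neg, not_false_iff]
        rw [if_pos ⟨hxA, hxp⟩]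
      have l2 : (φ y).1 = List.replicate (m+2+ι y) ⟨0, h0K⟩ := by
        rw [hφ]; simp only [hyS, dif_neg, not_false_iff]
        rw [if_pos ⟨hyA, hyp⟩]
      have l3 : m + 2 + ι x = m + 2 + ι y := by
        have := congrArg (fun w : Word K => w.1.length) hxy
        simp only [l1, l2, List.length_replicate] at this
        exact this
      exact hι (by omega)
  haveI hne : Nonempty (Fin n → 𝒳) := P.nonempty
  set ψ : Word K → (Fin n → 𝒳) := fun w =>
    if h : ∃ x, (x ∈ A ∧ 0 < P.p x) ∧ φ x = w then h.choose else Classical.arbitrary _ with hψ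
  have hdec : ∀ x, x ∈ A → 0 < P.p x → ψ (φ x) = x := by
    intro x hxA hxp
    have h : ∃ z, (z ∈ A ∧ 0 < P.p z) ∧ φ z = φ x := ⟨x, ⟨hxA, hxp⟩, rfl⟩
    rw [hψ]
    simp only [h, dif_pos]
    have hspec := h.choose_spec
    exact hinj ⟨hspec.1.1, hspec.1.2⟩ ⟨hxA, hxp⟩ hspec.2
  refine ⟨n, hnN, φ, ψ, ?_, ?_⟩
  · -- error bound
    have hsub : {x | ψ (φ x) ≠ x} ⊆ Aᶜ ∪ {x | P.p x = 0} := by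
      intro x hx
      by_contra hcon
      rw [Set.mem_union] at hcon
      push_neg at hcon
      obtain ⟨h1, h2⟩ := hcon
      have hxA : x ∈ A := Set.not_notMem.mp h1
      have hxp : 0 < P.p x := lt_of_le_of_ne (P.nonneg x) (Ne.symm h2)
      exact hx (hdec x hxA hxp)
    calc errP P φ ψ ≤ P.pr (Aᶜ ∪ {x | P.p x = 0}) := P.pr_mono hsub
      _ ≤ P.pr Aᶜ + P.pr {x | P.p x = 0} := P.pr_union_le _ _
      _ = (1 - P.pr A) + 0 := by
          have hz : P.pr {x | P.p x = 0} = 0 := P.pr_eq_zero (fun x hx => hx)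
          rw [P.pr_compl, hz]
      _ ≤ ε + ν' := by linarith
  · -- overflow bound
    set η : ℝ := (n:ℝ) * R + Real.sqrt n * (L + t) with hη
    have hηθ : η = θ + Real.sqrt n * t := by rw [hη, hθ]; ring
    have hsub : {x | wlen (φ x) > η} ⊆ A ∩ B := by
      intro x hx
      have hxlen : (φ x).1.length > η := hx
      by_cases hxS : x ∈ S
      · exfalso
        have l1 : (φ x).1.length = m := hlen_short ⟨x, hxS⟩
        have hm2 : (m:ℝ) < θ + 1 := Nat.ceil_lt_add_one hθpos.le
        rw [l1] at hxlen
        have : η ≥ θ + 2 := by rw [hηθ]; linarith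
        linarith
      · by_cases hxG : x ∈ A ∧ 0 < P.p x
        · -- long branch: x ∈ B
          refine ⟨hxG.1, ?_⟩
          have hxc : P.p x ≤ c := by
            by_contra hgt
            exact hxS ⟨hxG.1, not_le.mp hgt⟩
          show R + L / Real.sqrt n ≤ -Real.logb K (P.p x / P.pr A) / (n:ℝ)
          have h1 : θ ≤ -Real.logb K (P.p x / P.pr A) := by
            rw [neg_logb_ge_iff hK hxG.2 hPA θ]
            rw [hc] at hxc
            exact hxc
          rw [hRL]
          exact (div_le_div_iff_of_pos_right hn0).mpr h1
        · exfalso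
          have l1 : (φ x).1 = w₀.1 := by
            rw [hφ]; simp only [hxS, dif_neg, not_false_iff]
            rw [if_neg hxG]
          have l2 : (φ x).1.length = m + 1 := by rw [l1, hw₀]; exact List.length_replicate
          have hm2 : (m:ℝ) < θ + 1 := Nat.ceil_lt_add_one hθpos.le
          rw [l2] at hxlen
          have : η ≥ θ + 2 := by rw [hηθ]; linarith
          push_cast at hxlen
          linarith
    calc ovP P φ η ≤ P.pr (A ∩ B) := P.pr_mono hsub
      _ ≤ δ + ν' := le_of_lt hy

lemma ach_of_G {K : ℕ} (hK : 2 ≤ K) [Countable 𝒳] (X : Source 𝒳) {R ε δ L t : ℝ}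
    (hε0 : 0 ≤ ε) (hδ0 : 0 ≤ δ) (hεδ : ε + δ < 1) (ht : 0 < t)
    (hG : ∀ ν > (0:ℝ), liminf (fun n => innerInf K X ε R L ν n) atTop ≤ δ) :
    OptSecondAch K X ε δ R (L + t) := by
  classical
  set ek : ℕ → ℝ := fun k => min (1/(k+1)) ((1-ε-δ)/3) with hek
  have hek0 : ∀ k, 0 < ek k := fun k => lt_min (by positivity) (by linarith)
  have hek3 : ∀ k, ek k ≤ (1-ε-δ)/3 := fun k => min_le_right _ _
  -- good blocklengths via exists_good_code
  have key : ∀ k N : ℕ, ∃ n, N ≤ n ∧ ∃ (φ : (Fin n → 𝒳) → Word K) (ψ : Word K → (Fin n → 𝒳)),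
      errP (X n) φ ψ ≤ ε + ek k ∧
      ovP (X n) φ ((n:ℝ) * R + Real.sqrt (n:ℝ) * (L + t)) ≤ δ + ek k := by
    intro k N
    obtain ⟨n, hn, hcode⟩ := exists_good_code hK X hε0 hδ0 ht (hek0 k) (hek3 k) hεδ
      (hG (ek k) (hek0 k)) N
    exact ⟨n, hn, hcode⟩
  choose F hF hcode using key
  -- the diagonal sequence
  set ns' : ℕ → ℕ := fun k => Nat.rec (F 0 0) (fun k ih => F (k+1) (ih+1)) k with hns'
  have hns'succ : ∀ k, ns' (k+1) = F (k+1) (ns' k + 1) := fun k => rfl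
  have hns'mono : StrictMono ns' := strictMono_nat_of_lt_succ (fun k => by
    rw [hns'succ]
    exact lt_of_lt_of_le (Nat.lt_succ_self _) (hF (k+1) (ns' k + 1)))
  have hAll : ∀ k, ∃ (φ : (Fin (ns' k) → 𝒳) → Word K) (ψ : Word K → (Fin (ns' k) → 𝒳)),
      errP (X (ns' k)) φ ψ ≤ ε + ek k ∧
      ovP (X (ns' k)) φ ((ns' k : ℝ) * R + Real.sqrt (ns' k : ℝ) * (L + t)) ≤ δ + ek k := by
    intro k
    cases k with
    | zero => exact hcode 0 0
    | succ k => exact hcode (k+1) (ns' k + 1)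
  -- global code by choice, good wherever n is in the range of ns'
  have hEx : ∀ n : ℕ, ∃ (φ : (Fin n → 𝒳) → Word K) (ψ : Word K → (Fin n → 𝒳)),
      ∀ k, ns' k = n →
        errP (X n) φ ψ ≤ ε + ek k ∧
        ovP (X n) φ ((n : ℝ) * R + Real.sqrt (n : ℝ) * (L + t)) ≤ δ + ek k := by
    intro n
    by_cases h : ∃ k, ns' k = n
    · obtain ⟨k, rfl⟩ := h
      obtain ⟨φ, ψ, h1, h2⟩ := hAll k
      refine ⟨φ, ψ, fun k' hk' => ?_⟩
      have : k' = k := hns'mono.injective hk'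
      subst this
      exact ⟨h1, h2⟩
    · haveI : Nonempty (Fin n → 𝒳) := (X n).nonempty
      refine ⟨fun _ => ⟨[⟨0, lt_of_lt_of_le two_pos hK⟩], by simp⟩,
        fun _ => Classical.arbitrary _, fun k hk => absurd ⟨k, hk⟩ h⟩
  choose φg ψg hg using hEx
  refine ⟨φg, ψg, fun γ hγ => ?_⟩
  set k₀ := ⌈1/γ⌉₊ with hk₀
  have hk₀γ : ∀ k, k₀ ≤ k → ek k ≤ γ := by
    intro k hk
    have h1 : (1:ℝ)/γ ≤ k₀ := Nat.le_ceil _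
    have h2 : (k₀:ℝ) ≤ k := by exact_mod_cast hk
    have h3 : (1:ℝ)/(k+1) ≤ γ := by
      rw [div_le_iff₀ (by positivity)]
      have h4 : (1:ℝ)/γ ≤ (k:ℝ) + 1 := by linarith
      rw [div_le_iff₀ hγ] at h4
      linarith
    exact le_trans (min_le_left _ _) h3
  refine ⟨fun i => ns' (k₀ + i), hns'mono.comp (fun i j hij => by omega), fun i => ?_⟩
  obtain ⟨h1, h2⟩ := hg (ns' (k₀ + i)) (k₀ + i) rfl
  have h3 : ek (k₀ + i) ≤ γ := hk₀γ _ (Nat.le_add_right _ _)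
  exact ⟨le_trans h1 (by linarith), le_trans h2 (by linarith)⟩

/-- The real-number infimum equality lemma. -/
lemma sInf_eq_of_shift {S T : Set ℝ} (hST : ∀ L ∈ S, ∀ t > (0:ℝ), L + t ∈ T)
    (hTS : ∀ L ∈ T, ∀ t > (0:ℝ), L + t ∈ S) : sInf S = sInf T := by
  rcases Set.eq_empty_or_nonempty S with hS | hS
  · rcases Set.eq_empty_or_nonempty T with hT | hT
    · rw [hS, hT]
    · exfalso
      obtain ⟨L, hL⟩ := hT
      have := hTS L hL 1 one_pos
      rw [hS] at this
      exact this
  · have hT : T.Nonempty := by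
      obtain ⟨L, hL⟩ := hS
      exact ⟨L + 1, hST L hL 1 one_pos⟩
    by_cases hSb : BddBelow S
    · have hTb : BddBelow T := by
        obtain ⟨b, hb⟩ := hSb
        refine ⟨b - 1, fun L hL => ?_⟩
        have := hb (hTS L hL 1 one_pos)
        linarith
      apply le_antisymm
      · apply le_csInf hT
        intro L hL
        apply le_add_all
        intro c hc
        exact csInf_le hSb (hTS L hL c hc)
      · apply le_csInf hS
        intro L hL
        apply le_add_all
        intro c hc
        exact csInf_le hTb (hST L hL c hc)
    · have hTb : ¬ BddBelow T := by
        intro ⟨b, hb⟩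
        apply hSb
        refine ⟨b - 1, fun L hL => ?_⟩
        have := hb (hST L hL 1 one_pos)
        linarith
      rw [Real.sInf_of_not_bddBelow hSb, Real.sInf_of_not_bddBelow hTb]

end Main
/-- optimistic second-order general formula L*(ε,δ,R|X) = G*_{ε,δ}(R|X). -/
theorem statement15 {𝒳 : Type*} [Countable 𝒳] (K : ℕ) (hK : 2 ≤ K) (X : Source 𝒳)
    (R ε δ : ℝ) (hR : 0 ≤ R)
    (hε0 : 0 ≤ ε) (hε1 : ε < 1) (hδ0 : 0 ≤ δ) (hδ1 : δ < 1) (hεδ : ε + δ < 1) :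
    LoptStar K X ε δ R = GsecondStar K X ε δ R := by
  rw [LoptStar, GsecondStar, GsecondStar_eq K X ε δ R hε0 hδ0]
  apply sInf_eq_of_shift
  · intro L hL t ht
    intro ν hν
    exact converse_liminf_le hK X hδ0 hε0 hν ht hL
  · intro L hL t ht
    exact ach_of_G hK X hε0 hδ0 hεδ ht hL
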